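/- Let S be a proper sampling on {1, …, n} whose pairwise marginals satisfy P_ij = c₂ p_i p_j for all i ≠ j, where c₂ ≥ 0 and c₂ p_i ≤ 1 for all i. Assume each f_i : ℝ^d → ℝ is convex and M_i-smooth. Then for all x, y ∈ ℝ^d, Σ_C p_C ‖∇f_{v(C)}(x) − ∇f_{v(C)}(y)‖² ≤ 2 ( c₂ L + max_{i∈[n]} (λmax(M_i)/(n p_i)) (1 − p_i c₂) ) (f(x) − f(y) − ⟨∇f(y), x − y⟩), where L = (1/n) λmax(Σ_{i=1}^n M_i). -/

import Mathlib

open RealInnerProductSpace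

/-- The largest eigenvalue of a (symmetric) real matrix, characterized as the supremum of the
Rayleigh quotient `⟨Ax, x⟩` over the unit sphere. -/
noncomputable def lamMax {d : ℕ} (A : Matrix (Fin d) (Fin d) ℝ) : ℝ :=
  sSup {r : ℝ | ∃ x : EuclideanSpace ℝ (Fin d), ‖x‖ = 1 ∧ r = ∑ j, ∑ k, A j k * x k * x j}

section AuxQuad

variable {d : ℕ}

private lemma myQuad_bddAbove (A : Matrix (Fin d) (Fin d) ℝ) :
    BddAbove {r : ℝ | ∃ x : EuclideanSpace ℝ (Fin d), ‖x‖ = 1 ∧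
      r = ∑ j, ∑ k, A j k * x k * x j} := by
  refine ⟨∑ j, ∑ k, |A j k|, ?_⟩
  rintro r ⟨x, hx, rfl⟩
  have hsq : ∑ i, x i ^ 2 = 1 := by
    have h := EuclideanSpace.norm_eq x
    rw [hx] at h
    have h2 : (1:ℝ) = Real.sqrt (∑ i, ‖x i‖ ^ 2) := h
    have : ∑ i, ‖x i‖ ^ 2 = 1 := by
      have hnn : 0 ≤ ∑ i, ‖x i‖ ^ 2 := Finset.sum_nonneg fun i _ => sq_nonneg _
      nlinarith [Real.sq_sqrt hnn]
    simpa [Real.norm_eq_abs, sq_abs] using this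
  have hxk : ∀ k, |x k| ≤ 1 := by
    intro k
    have h1 : x k ^ 2 ≤ ∑ i, x i ^ 2 :=
      Finset.single_le_sum (f := fun i => x i ^ 2) (fun i _ => sq_nonneg _) (Finset.mem_univ k)
    rw [hsq] at h1
    rw [← Real.sqrt_one, ← Real.sqrt_sq_eq_abs]
    exact Real.sqrt_le_sqrt (by linarith)
  refine Finset.sum_le_sum fun j _ => Finset.sum_le_sum fun k _ => ?_
  calc A j k * x k * x j ≤ |A j k * x k * x j| := le_abs_self _
    _ = |A j k| * |x k| * |x j| := by rw [abs_mul, abs_mul]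
    _ ≤ |A j k| := by
        have h1 : |A j k| * |x k| * |x j| ≤ |A j k| * |x k| :=
          mul_le_of_le_one_right (mul_nonneg (abs_nonneg _) (abs_nonneg _)) (hxk j)
        have h2 : |A j k| * |x k| ≤ |A j k| :=
          mul_le_of_le_one_right (abs_nonneg _) (hxk k)
        linarith

private lemma myQuad_le_lamMax (A : Matrix (Fin d) (Fin d) ℝ) (h : EuclideanSpace ℝ (Fin d)) :
    ∑ j, ∑ k, A j k * h k * h j ≤ lamMax A * ‖h‖ ^ 2 := by
  rcases eq_or_ne h 0 with rfl | hne
  · simp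
  · set c : ℝ := ‖h‖⁻¹ with hc
    have hne' : ‖h‖ ≠ 0 := norm_ne_zero_iff.2 hne
    have hcpos : 0 < c := inv_pos.2 (norm_pos_iff.2 hne)
    have hnorm : ‖c • h‖ = 1 := by
      rw [norm_smul, Real.norm_eq_abs, abs_of_pos hcpos]
      rw [hc]; exact inv_mul_cancel₀ hne'
    have hmem : (∑ j, ∑ k, A j k * ((c • h) k) * ((c • h) j)) ≤ lamMax A :=
      le_csSup (myQuad_bddAbove A) ⟨c • h, hnorm, rfl⟩
    have hscale : (∑ j, ∑ k, A j k * ((c • h) k) * ((c • h) j))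
        = c ^ 2 * ∑ j, ∑ k, A j k * h k * h j := by
      simp only [PiLp.smul_apply, smul_eq_mul, Finset.mul_sum]
      congr 1; ext j; congr 1; ext k; ring
    rw [hscale] at hmem
    have hc2 : c ^ 2 * ‖h‖ ^ 2 = 1 := by
      rw [hc]
      field_simp
    have hmul := mul_le_mul_of_nonneg_right hmem (sq_nonneg ‖h‖)
    have key : (∑ j, ∑ k, A j k * h k * h j)
        = c ^ 2 * (∑ j, ∑ k, A j k * h k * h j) * ‖h‖ ^ 2 := by
      rw [show c ^ 2 * (∑ j, ∑ k, A j k * h k * h j) * ‖h‖ ^ 2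
          = (∑ j, ∑ k, A j k * h k * h j) * (c ^ 2 * ‖h‖ ^ 2) by ring, hc2, mul_one]
    linarith

private lemma myQuad_pos_of_posDef (A : Matrix (Fin d) (Fin d) ℝ) (hA : A.PosDef)
    (x : EuclideanSpace ℝ (Fin d)) (hx : x ≠ 0) :
    0 < ∑ j, ∑ k, A j k * x k * x j := by
  have hxne : (x : Fin d → ℝ) ≠ 0 := by
    intro h0
    exact hx (by ext i; exact congrFun h0 i)
  have hpos := hA.dotProduct_mulVec_pos hxne
  have hrw : dotProduct (star (x : Fin d → ℝ)) (Matrix.mulVec A x)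
      = ∑ j, ∑ k, A j k * x k * x j := by
    simp only [star_trivial, dotProduct, Matrix.mulVec, Finset.mul_sum]
    congr 1; ext j; congr 1; ext k; ring
  rw [hrw] at hpos
  exact hpos

private lemma lamMax_pos' (A : Matrix (Fin d) (Fin d) ℝ) (x : EuclideanSpace ℝ (Fin d))
    (hx : ‖x‖ = 1) (hpos : 0 < ∑ j, ∑ k, A j k * x k * x j) : 0 < lamMax A :=
  lt_of_lt_of_le hpos (le_csSup (myQuad_bddAbove A) ⟨x, hx, rfl⟩)

private lemma grad_inner' (f : EuclideanSpace ℝ (Fin d) → ℝ) (x v : EuclideanSpace ℝ (Fin d)) :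
    ⟪gradient f x, v⟫ = fderiv ℝ f x v :=
  InnerProductSpace.toDual_symm_apply

private lemma first_order (f : EuclideanSpace ℝ (Fin d) → ℝ) (hd : Differentiable ℝ f)
    (hc : ConvexOn ℝ Set.univ f) (y z : EuclideanSpace ℝ (Fin d)) :
    f y + ⟪gradient f y, z - y⟫ ≤ f z := by
  set v := z - y with hv
  have hline : HasDerivAt (fun t : ℝ => t • v + y) v 0 := by
    simpa using ((hasDerivAt_id (0:ℝ)).smul_const v).add_const y
  have hcomp : HasDerivAt (fun t : ℝ => f (t • v + y)) (fderiv ℝ f y v) 0 := by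
    have hf : HasFDerivAt f (fderiv ℝ f y) ((0:ℝ) • v + y) := by
      simpa using (hd ((0:ℝ) • v + y)).hasFDerivAt
    exact hf.comp_hasDerivAt (0:ℝ) hline
  have hg : ConvexOn ℝ Set.univ (fun t : ℝ => f (t • v + y)) := by
    have h := hc.comp_affineMap (AffineMap.lineMap y z : ℝ →ᵃ[ℝ] EuclideanSpace ℝ (Fin d))
    have heq : (f ∘ (AffineMap.lineMap y z : ℝ →ᵃ[ℝ] EuclideanSpace ℝ (Fin d)))
        = fun t : ℝ => f (t • v + y) := by
      funext t
      simp [AffineMap.lineMap_apply, hv]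
    rw [heq] at h
    simpa using h
  have hslope := hg.le_slope_of_hasDerivAt (Set.mem_univ (0:ℝ)) (Set.mem_univ (1:ℝ))
    zero_lt_one hcomp
  have hs : slope (fun t : ℝ => f (t • v + y)) 0 1 = f z - f y := by
    rw [slope_def_field]
    simp [hv]
  rw [hs] at hslope
  rw [grad_inner']
  linarith

private lemma cocoercive (f : EuclideanSpace ℝ (Fin d) → ℝ) (hd : Differentiable ℝ f)
    (hc : ConvexOn ℝ Set.univ f) (lam : ℝ) (hlam : 0 < lam)
    (hs : ∀ u h : EuclideanSpace ℝ (Fin d),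
      f (u + h) ≤ f u + ⟪gradient f u, h⟫ + lam / 2 * ‖h‖ ^ 2)
    (x y : EuclideanSpace ℝ (Fin d)) :
    ‖gradient f x - gradient f y‖ ^ 2
      ≤ 2 * lam * (f x - f y - ⟪gradient f y, x - y⟫) := by
  set g := gradient f y with hg
  set s := gradient f x - g with hsdef
  set h : EuclideanSpace ℝ (Fin d) := (-(lam⁻¹)) • s with hhdef
  have h1 := hs x h
  have h2 := first_order f hd hc y (x + h)
  have e1 : ⟪g, x + h - y⟫ = ⟪g, x - y⟫ + ⟪g, h⟫ := by
    rw [show x + h - y = (x - y) + h by abel, inner_add_right]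
  have e2 : ⟪gradient f x, h⟫ - ⟪g, h⟫ = ⟪s, h⟫ := by
    rw [hsdef, inner_sub_left]
  have e3 : ⟪s, h⟫ = -(lam⁻¹) * ‖s‖ ^ 2 := by
    rw [hhdef, real_inner_smul_right, real_inner_self_eq_norm_sq]
  have e4 : ‖h‖ ^ 2 = lam⁻¹ ^ 2 * ‖s‖ ^ 2 := by
    rw [hhdef, norm_smul]
    rw [Real.norm_eq_abs, abs_neg, abs_of_pos (inv_pos.2 hlam)]
    ring
  have hlamne : lam ≠ 0 := ne_of_gt hlam
  have key : ‖s‖ ^ 2 * (2 * lam)⁻¹ ≤ f x - f y - ⟪g, x - y⟫ := by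
    have h3 : f y + (⟪g, x - y⟫ + ⟪g, h⟫)
        ≤ f x + ⟪gradient f x, h⟫ + lam / 2 * ‖h‖ ^ 2 := by
      rw [← e1]; linarith
    have h5 : f y + ⟪g, x - y⟫ ≤ f x + ⟪s, h⟫ + lam / 2 * ‖h‖ ^ 2 := by linarith
    rw [e3, e4] at h5
    have harith : -(lam⁻¹) * ‖s‖^2 + lam / 2 * (lam⁻¹ ^ 2 * ‖s‖ ^ 2)
        = -(‖s‖^2 * (2*lam)⁻¹) := by
      field_simp
      ring
    linarith
  have h2l : (0:ℝ) < 2*lam := by linarith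
  calc ‖s‖ ^ 2 = (‖s‖ ^ 2 * (2*lam)⁻¹) * (2*lam) := by field_simp
    _ ≤ (f x - f y - ⟪g, x - y⟫) * (2 * lam) :=
        mul_le_mul_of_nonneg_right key (le_of_lt h2l)
    _ = 2 * lam * (f x - f y - ⟪g, x - y⟫) := by ring

private lemma convexOn_finsetSum {ι : Type*} (t : Finset ι)
    (g : ι → EuclideanSpace ℝ (Fin d) → ℝ)
    (h : ∀ i ∈ t, ConvexOn ℝ Set.univ (g i)) :
    ConvexOn ℝ Set.univ (fun z => ∑ i ∈ t, g i z) := by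
  classical
  induction t using Finset.induction with
  | empty => simpa using convexOn_const (0:ℝ) convex_univ
  | @insert a s hnotmem ih =>
    have h1 : ConvexOn ℝ Set.univ (g a) := h a (Finset.mem_insert_self a s)
    have h2 : ConvexOn ℝ Set.univ (fun z => ∑ i ∈ s, g i z) :=
      ih fun i hi => h i (Finset.mem_insert_of_mem hi)
    have := h1.add h2
    rw [show (fun z => ∑ i ∈ insert a s, g i z) = g a + fun z => ∑ i ∈ s, g i z from
      funext fun z => by simp [Finset.sum_insert hnotmem]]
    exact this

private lemma grad_comb {n : ℕ} (f : Fin n → EuclideanSpace ℝ (Fin d) → ℝ)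
    (hdf : ∀ i, Differentiable ℝ (f i)) (c : ℝ) (x : EuclideanSpace ℝ (Fin d)) :
    gradient (fun z => c * ∑ i, f i z) x = c • ∑ i, gradient (f i) x := by
  have hsum : DifferentiableAt ℝ (fun z => ∑ i, f i z) x := by
    apply DifferentiableAt.fun_sum
    intro i _
    exact (hdf i).differentiableAt
  have h1 : fderiv ℝ (fun z => c * ∑ i, f i z) x
      = c • fderiv ℝ (fun z => ∑ i, f i z) x := fderiv_const_mul hsum c
  have h2 : fderiv ℝ (fun z => ∑ i, f i z) x = ∑ i, fderiv ℝ (f i) x :=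
    fderiv_fun_sum fun i _ => (hdf i).differentiableAt
  show (InnerProductSpace.toDual ℝ _).symm (fderiv ℝ (fun z => c * ∑ i, f i z) x) = _
  rw [h1, h2, map_smul, map_sum]
  rfl

end AuxQuad

private lemma quad_sum {d n : ℕ} (M : Fin n → Matrix (Fin d) (Fin d) ℝ)
    (h : EuclideanSpace ℝ (Fin d)) :
    ∑ j, ∑ k, (∑ i, M i) j k * h k * h j = ∑ i, ∑ j, ∑ k, M i j k * h k * h j := by
  simp only [Matrix.sum_apply, Finset.sum_mul]
  rw [Finset.sum_congr rfl fun j (_ : j ∈ Finset.univ) => Finset.sum_comm]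
  exact Finset.sum_comm


set_option maxHeartbeats 1000000 in
/-- **Key estimate in the proof of Proposition 2.** Let `S` be a proper sampling whose pairwise
marginals satisfy `P_ij = c₂ p_i p_j` for `i ≠ j`, with `c₂ ≥ 0` and `c₂ p_i ≤ 1`. If each `f_i`
is convex and `M_i`-smooth, then for all `x, y`,
`Σ_C p_C ‖∇f_{v(C)}(x) − ∇f_{v(C)}(y)‖²
  ≤ 2 (c₂ L + max_i (λmax(M_i)/(n p_i))(1 − p_i c₂)) (f(x) − f(y) − ⟨∇f(y), x − y⟩)`,
where `L = (1/n) λmax(Σ_i M_i)`. -/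
theorem expected_smoothness_pairwise_product_marginals
    {d n : ℕ} (hn : 0 < n)
    (p : Finset (Fin n) → ℝ)
    (hp0 : ∀ C, 0 ≤ p C)
    (hpsum : ∑ C : Finset (Fin n), p C = 1)
    (q : Fin n → ℝ)
    (hq : ∀ i, q i = ∑ C ∈ Finset.univ.filter (fun C : Finset (Fin n) => i ∈ C), p C)
    (hproper : ∀ i, 0 < q i)
    (Pm : Fin n → Fin n → ℝ)
    (hPm : ∀ i j, Pm i j = ∑ C ∈ Finset.univ.filter (fun C : Finset (Fin n) => i ∈ C ∧ j ∈ C), p C)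
    (c₂ : ℝ) (hc₂0 : 0 ≤ c₂)
    (hc₂q : ∀ i, c₂ * q i ≤ 1)
    (hpair : ∀ i j, i ≠ j → Pm i j = c₂ * q i * q j)
    (f : Fin n → EuclideanSpace ℝ (Fin d) → ℝ)
    (hdiff : ∀ i, Differentiable ℝ (f i))
    (hconv : ∀ i, ConvexOn ℝ Set.univ (f i))
    (M : Fin n → Matrix (Fin d) (Fin d) ℝ)
    (hMpd : ∀ i, (M i).PosDef)
    (hsmooth : ∀ i (x h : EuclideanSpace ℝ (Fin d)),
      f i (x + h) ≤ f i x + ⟪gradient (f i) x, h⟫ + (1 / 2) * ∑ j, ∑ k, M i j k * h k * h j)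
    (F : EuclideanSpace ℝ (Fin d) → ℝ)
    (hF : ∀ x, F x = (1 / (n : ℝ)) * ∑ i, f i x)
    (gC : Finset (Fin n) → EuclideanSpace ℝ (Fin d) → EuclideanSpace ℝ (Fin d))
    (hgC : ∀ C x, gC C x = ((n : ℝ)⁻¹) • ∑ i ∈ C, (q i)⁻¹ • gradient (f i) x)
    (L : ℝ) (hL : L = (1 / (n : ℝ)) * lamMax (∑ i, M i)) :
    ∀ x y, ∑ C : Finset (Fin n), p C * ‖gC C x - gC C y‖ ^ 2
        ≤ 2 * (c₂ * L + ⨆ i : Fin n, lamMax (M i) / ((n : ℝ) * q i) * (1 - q i * c₂))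
            * (F x - F y - ⟪gradient F y, x - y⟫) := by
  intro x y
  rcases Nat.eq_zero_or_pos d with hd0 | hd
  · subst hd0
    haveI : Subsingleton (EuclideanSpace ℝ (Fin 0)) :=
      ⟨fun a b => by ext i; exact i.elim0⟩
    obtain rfl : x = y := Subsingleton.elim x y
    simp
  · have hnR : (0:ℝ) < n := Nat.cast_pos.2 hn
    have hnne : (n:ℝ) ≠ 0 := ne_of_gt hnR
    have hqne : ∀ i, q i ≠ 0 := fun i => ne_of_gt (hproper i)
    set a : Fin n → EuclideanSpace ℝ (Fin d) :=
      fun i => gradient (f i) x - gradient (f i) y with ha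
    set Dq : Fin n → ℝ := fun i => f i x - f i y - ⟪gradient (f i) y, x - y⟫ with hDq
    set K := ⨆ i : Fin n, lamMax (M i) / ((n:ℝ) * q i) * (1 - q i * c₂) with hK
    set DF := F x - F y - ⟪gradient F y, x - y⟫ with hDFdef
    -- basic facts about F
    have hFfun : F = fun z => (1/(n:ℝ)) * ∑ i, f i z := funext hF
    have hFdiff : Differentiable ℝ F := by
      rw [hFfun]
      exact Differentiable.const_mul (Differentiable.fun_sum fun i _ => hdiff i) _
    have hFconv : ConvexOn ℝ Set.univ F := by
      rw [hFfun]
      have hs := convexOn_finsetSum Finset.univ f (fun i _ => hconv i)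
      have h2 := hs.smul (by positivity : (0:ℝ) ≤ 1/(n:ℝ))
      simpa [smul_eq_mul] using h2
    have hgradF : ∀ z, gradient F z = (1/(n:ℝ)) • ∑ i, gradient (f i) z := by
      intro z
      rw [hFfun]
      exact grad_comb f hdiff _ z
    have hinnerF : ∀ z v, ⟪gradient F z, v⟫ = (1/(n:ℝ)) * ∑ i, ⟪gradient (f i) z, v⟫ := by
      intro z v
      rw [hgradF, real_inner_smul_left, sum_inner]
    -- smoothness of each f i with scalar constant
    have hsmooth' : ∀ i (u h : EuclideanSpace ℝ (Fin d)),
        f i (u + h) ≤ f i u + ⟪gradient (f i) u, h⟫ + lamMax (M i) / 2 * ‖h‖ ^ 2 := by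
      intro i u h
      have h1 := hsmooth i u h
      have h2 := myQuad_le_lamMax (M i) h
      linarith
    -- positivity of eigenvalues
    have hx0n : ‖(EuclideanSpace.single ⟨0, hd⟩ 1 : EuclideanSpace ℝ (Fin d))‖ = 1 := by
      simp
    have hx0ne : (EuclideanSpace.single ⟨0, hd⟩ 1 : EuclideanSpace ℝ (Fin d)) ≠ 0 := by
      intro h0
      have h1 := congrFun (congrArg (fun (v : EuclideanSpace ℝ (Fin d)) => (v : Fin d → ℝ)) h0)
        ⟨0, hd⟩
      simp [EuclideanSpace.single_apply] at h1
    have hlami : ∀ i, 0 < lamMax (M i) := fun i =>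
      lamMax_pos' _ _ hx0n (myQuad_pos_of_posDef _ (hMpd i) _ hx0ne)
    have hcoco : ∀ i, ‖a i‖ ^ 2 ≤ 2 * lamMax (M i) * Dq i := fun i =>
      cocoercive (f i) (hdiff i) (hconv i) _ (hlami i) (hsmooth' i) x y
    have hDq0 : ∀ i, 0 ≤ Dq i := by
      intro i
      have h1 := first_order (f i) (hdiff i) (hconv i) y x
      simp only [hDq]
      linarith
    -- positivity of L
    haveI : Nonempty (Fin n) := Fin.pos_iff_nonempty.1 hn
    have hLpos : 0 < L := by
      rw [hL]
      apply mul_pos (by positivity)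
      apply lamMax_pos' _ _ hx0n
      rw [quad_sum M]
      exact Finset.sum_pos
        (fun i _ => myQuad_pos_of_posDef _ (hMpd i) _ hx0ne) Finset.univ_nonempty
    -- smoothness of F
    have hFsmooth : ∀ u h : EuclideanSpace ℝ (Fin d),
        F (u + h) ≤ F u + ⟪gradient F u, h⟫ + L / 2 * ‖h‖ ^ 2 := by
      intro u h
      have hsum : ∑ i, f i (u + h)
          ≤ ∑ i, (f i u + ⟪gradient (f i) u, h⟫ + (1/2) * ∑ j, ∑ k, M i j k * h k * h j) :=
        Finset.sum_le_sum fun i _ => hsmooth i u h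
      have hQ : ∑ i, ∑ j, ∑ k, M i j k * h k * h j ≤ lamMax (∑ i, M i) * ‖h‖^2 := by
        rw [← quad_sum M h]
        exact myQuad_le_lamMax _ h
      have hnL : lamMax (∑ i, M i) = (n:ℝ) * L := by
        rw [hL]
        field_simp
      rw [hnL] at hQ
      have expand : ∑ i, (f i u + ⟪gradient (f i) u, h⟫
            + (1/2) * ∑ j, ∑ k, M i j k * h k * h j)
          = ∑ i, f i u + ∑ i, ⟪gradient (f i) u, h⟫
            + (1/2) * ∑ i, ∑ j, ∑ k, M i j k * h k * h j := by
        rw [Finset.sum_add_distrib, Finset.sum_add_distrib, Finset.mul_sum]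
      rw [expand] at hsum
      have key : ∑ i, f i (u + h)
          ≤ ∑ i, f i u + ∑ i, ⟪gradient (f i) u, h⟫ + (1/2) * ((n:ℝ) * L * ‖h‖^2) := by
        linarith
      have h6 := mul_le_mul_of_nonneg_left key (by positivity : (0:ℝ) ≤ 1/(n:ℝ))
      have h7 : (1/(n:ℝ)) * (∑ i, f i u + ∑ i, ⟪gradient (f i) u, h⟫
            + (1/2) * ((n:ℝ) * L * ‖h‖^2))
          = (1/(n:ℝ)) * ∑ i, f i u + (1/(n:ℝ)) * ∑ i, ⟪gradient (f i) u, h⟫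
            + L/2 * ‖h‖^2 := by
        field_simp
      rw [hF (u+h), hF u, hinnerF u h]
      linarith
    have hcocoF := cocoercive F hFdiff hFconv L hLpos hFsmooth x y
    rw [← hDFdef] at hcocoF
    have hgradsub : gradient F x - gradient F y = (1/(n:ℝ)) • ∑ i, a i := by
      rw [hgradF, hgradF, ← smul_sub, ← Finset.sum_sub_distrib]
    have hDFsum : DF = (1/(n:ℝ)) * ∑ i, Dq i := by
      rw [hDFdef, hF x, hF y, hinnerF y (x - y)]
      simp only [hDq]
      rw [Finset.sum_sub_distrib, Finset.sum_sub_distrib]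
      ring
    -- the key algebraic identity
    set T : Fin n → Fin n → ℝ := fun i j => (q i)⁻¹ * ((q j)⁻¹ * ⟪a i, a j⟫) with hT
    have step1 : ∀ C : Finset (Fin n), ‖gC C x - gC C y‖ ^ 2
        = ((n:ℝ)⁻¹)^2 * ∑ i ∈ C, ∑ j ∈ C, T i j := by
      intro C
      have hdiffC : gC C x - gC C y = (n:ℝ)⁻¹ • ∑ i ∈ C, (q i)⁻¹ • a i := by
        rw [hgC, hgC, ← smul_sub, ← Finset.sum_sub_distrib]
        congr 1
        refine Finset.sum_congr rfl fun i _ => ?_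
        rw [← smul_sub]
      rw [hdiffC, norm_smul, mul_pow]
      congr 1
      · rw [Real.norm_eq_abs, sq_abs]
      · rw [← real_inner_self_eq_norm_sq, sum_inner]
        refine Finset.sum_congr rfl fun i _ => ?_
        rw [real_inner_smul_left, inner_sum, Finset.mul_sum]
        refine Finset.sum_congr rfl fun j _ => ?_
        rw [real_inner_smul_right]
    have esum : ∀ (C : Finset (Fin n)) (g : Fin n → ℝ),
        ∑ i ∈ C, g i = ∑ i : Fin n, if i ∈ C then g i else 0 := by
      intro C g
      rw [Finset.sum_ite_mem, Finset.univ_inter]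
    have step2 : ∑ C : Finset (Fin n), p C * ∑ i ∈ C, ∑ j ∈ C, T i j
        = ∑ i, ∑ j, Pm i j * T i j := by
      have expand : ∀ C : Finset (Fin n), p C * ∑ i ∈ C, ∑ j ∈ C, T i j
          = ∑ i : Fin n, ∑ j : Fin n, (if i ∈ C ∧ j ∈ C then p C * T i j else 0) := by
        intro C
        calc p C * ∑ i ∈ C, ∑ j ∈ C, T i j
            = ∑ i ∈ C, ∑ j ∈ C, p C * T i j := by
              rw [Finset.mul_sum]
              exact Finset.sum_congr rfl fun i _ => Finset.mul_sum _ _ _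
          _ = ∑ i : Fin n, if i ∈ C then ∑ j ∈ C, p C * T i j else 0 := esum C _
          _ = ∑ i : Fin n, ∑ j : Fin n, (if i ∈ C ∧ j ∈ C then p C * T i j else 0) := by
              refine Finset.sum_congr rfl fun i _ => ?_
              by_cases hi : i ∈ C
              · simp only [hi, if_true, true_and]
                exact esum C _
              · simp [hi]
      calc ∑ C : Finset (Fin n), p C * ∑ i ∈ C, ∑ j ∈ C, T i j
          = ∑ C : Finset (Fin n), ∑ i : Fin n, ∑ j : Fin n,
              (if i ∈ C ∧ j ∈ C then p C * T i j else 0) :=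
            Finset.sum_congr rfl fun C _ => expand C
        _ = ∑ i, ∑ j, Pm i j * T i j := by
            rw [Finset.sum_comm]
            refine Finset.sum_congr rfl fun i _ => ?_
            rw [Finset.sum_comm]
            refine Finset.sum_congr rfl fun j _ => ?_
            rw [hPm, Finset.sum_filter, Finset.sum_mul]
            refine Finset.sum_congr rfl fun C _ => ?_
            by_cases hC : i ∈ C ∧ j ∈ C <;> simp [hC]
    have hPmdiag : ∀ i, Pm i i = q i := by
      intro i
      rw [hPm, hq]
      congr 1
      apply Finset.filter_congr
      intro C _
      simp
    have step3 : ∑ i, ∑ j, Pm i j * T i j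
        = c₂ * ⟪∑ i, a i, ∑ i, a i⟫ + ∑ i, ((q i)⁻¹ - c₂) * ‖a i‖ ^ 2 := by
      have per : ∀ i j, Pm i j * T i j
          = c₂ * ⟪a i, a j⟫ + (if j = i then ((q i)⁻¹ - c₂) * ‖a i‖ ^ 2 else 0) := by
        intro i j
        by_cases hij : j = i
        · subst hij
          rw [if_pos rfl, hPmdiag]
          simp only [hT]
          rw [real_inner_self_eq_norm_sq]
          field_simp [hqne j]
          ring
        · rw [if_neg hij, add_zero, hpair i j (fun h => hij h.symm)]
          simp only [hT]
          field_simp [hqne i, hqne j]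
      calc ∑ i, ∑ j, Pm i j * T i j
          = ∑ i, ∑ j, (c₂ * ⟪a i, a j⟫
              + (if j = i then ((q i)⁻¹ - c₂) * ‖a i‖ ^ 2 else 0)) :=
            Finset.sum_congr rfl fun i _ => Finset.sum_congr rfl fun j _ => per i j
        _ = c₂ * ⟪∑ i, a i, ∑ i, a i⟫ + ∑ i, ((q i)⁻¹ - c₂) * ‖a i‖ ^ 2 := by
            simp only [Finset.sum_add_distrib]
            congr 1
            · have hin : ⟪∑ i, a i, ∑ j, a j⟫ = ∑ i, ∑ j, ⟪a i, a j⟫ := by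
                rw [sum_inner]
                exact Finset.sum_congr rfl fun i _ => inner_sum _ _ _
              rw [hin, Finset.mul_sum]
              exact Finset.sum_congr rfl fun i _ => (Finset.mul_sum _ _ _).symm
            · refine Finset.sum_congr rfl fun i _ => ?_
              rw [Finset.sum_ite_eq' Finset.univ i]
              simp
    -- final bounds
    have hns : ‖(1/(n:ℝ)) • ∑ i, a i‖^2 = ((n:ℝ)⁻¹)^2 * ⟪∑ i, a i, ∑ i, a i⟫ := by
      rw [norm_smul, mul_pow, Real.norm_eq_abs, sq_abs, real_inner_self_eq_norm_sq, one_div]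
    have mainId : ∑ C : Finset (Fin n), p C * ‖gC C x - gC C y‖ ^ 2
        = c₂ * ‖(1/(n:ℝ)) • ∑ i, a i‖^2
          + ((n:ℝ)⁻¹)^2 * ∑ i, ((q i)⁻¹ - c₂) * ‖a i‖ ^ 2 := by
      calc ∑ C : Finset (Fin n), p C * ‖gC C x - gC C y‖ ^ 2
          = ∑ C : Finset (Fin n), ((n:ℝ)⁻¹)^2 * (p C * ∑ i ∈ C, ∑ j ∈ C, T i j) := by
            refine Finset.sum_congr rfl fun C _ => ?_
            rw [step1 C]
            ring
        _ = ((n:ℝ)⁻¹)^2 * ∑ C : Finset (Fin n), p C * ∑ i ∈ C, ∑ j ∈ C, T i j :=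
            (Finset.mul_sum _ _ _).symm
        _ = ((n:ℝ)⁻¹)^2 * (c₂ * ⟪∑ i, a i, ∑ i, a i⟫
              + ∑ i, ((q i)⁻¹ - c₂) * ‖a i‖ ^ 2) := by rw [step2, step3]
        _ = c₂ * ‖(1/(n:ℝ)) • ∑ i, a i‖^2
              + ((n:ℝ)⁻¹)^2 * ∑ i, ((q i)⁻¹ - c₂) * ‖a i‖ ^ 2 := by
            rw [hns]
            ring
    have hBnd : ‖(1/(n:ℝ)) • ∑ i, a i‖^2 ≤ 2 * L * DF := by
      rw [← hgradsub]
      exact hcocoF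
    have hKle : ∀ i, lamMax (M i) / ((n:ℝ) * q i) * (1 - q i * c₂) ≤ K := by
      intro i
      rw [hK]
      exact le_ciSup (Set.Finite.bddAbove (Set.finite_range
        (fun i : Fin n => lamMax (M i) / ((n:ℝ) * q i) * (1 - q i * c₂)))) i
    have hterm : ∀ i, ((n:ℝ)⁻¹)^2 * (((q i)⁻¹ - c₂) * ‖a i‖^2)
        ≤ 2 * K * ((1/(n:ℝ)) * Dq i) := by
      intro i
      have hcoefnn : 0 ≤ (q i)⁻¹ - c₂ := by
        rw [sub_nonneg, inv_eq_one_div]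
        exact (le_div_iff₀ (hproper i)).2 (hc₂q i)
      have h1 : ((q i)⁻¹ - c₂) * ‖a i‖^2 ≤ ((q i)⁻¹ - c₂) * (2 * lamMax (M i) * Dq i) :=
        mul_le_mul_of_nonneg_left (hcoco i) hcoefnn
      have h2 : ((n:ℝ)⁻¹)^2 * (((q i)⁻¹ - c₂) * (2 * lamMax (M i) * Dq i))
          = 2 * (lamMax (M i) / ((n:ℝ) * q i) * (1 - q i * c₂)) * ((1/(n:ℝ)) * Dq i) := by
        field_simp [hqne i, hnne]
      have h3 : 2 * (lamMax (M i) / ((n:ℝ) * q i) * (1 - q i * c₂)) * ((1/(n:ℝ)) * Dq i)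
          ≤ 2 * K * ((1/(n:ℝ)) * Dq i) := by
        apply mul_le_mul_of_nonneg_right _ (mul_nonneg (by positivity) (hDq0 i))
        linarith [hKle i]
      calc ((n:ℝ)⁻¹)^2 * (((q i)⁻¹ - c₂) * ‖a i‖^2)
          ≤ ((n:ℝ)⁻¹)^2 * (((q i)⁻¹ - c₂) * (2 * lamMax (M i) * Dq i)) :=
            mul_le_mul_of_nonneg_left h1 (by positivity)
        _ = _ := h2
        _ ≤ _ := h3
    have hsum2 : ((n:ℝ)⁻¹)^2 * ∑ i, ((q i)⁻¹ - c₂) * ‖a i‖^2 ≤ 2 * K * DF := by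
      rw [Finset.mul_sum]
      calc ∑ i, ((n:ℝ)⁻¹)^2 * (((q i)⁻¹ - c₂) * ‖a i‖^2)
          ≤ ∑ i, 2 * K * ((1/(n:ℝ)) * Dq i) := Finset.sum_le_sum fun i _ => hterm i
        _ = 2 * K * DF := by
            have hc : ∀ i ∈ Finset.univ, 2 * K * ((1/(n:ℝ)) * Dq i)
                = (2 * K * (1/(n:ℝ))) * Dq i := fun i _ => by ring
            rw [Finset.sum_congr rfl hc, ← Finset.mul_sum, hDFsum]
            ring
    calc ∑ C : Finset (Fin n), p C * ‖gC C x - gC C y‖ ^ 2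
        = c₂ * ‖(1/(n:ℝ)) • ∑ i, a i‖^2
          + ((n:ℝ)⁻¹)^2 * ∑ i, ((q i)⁻¹ - c₂) * ‖a i‖ ^ 2 := mainId
      _ ≤ c₂ * (2 * L * DF) + 2 * K * DF :=
          add_le_add (mul_le_mul_of_nonneg_left hBnd hc₂0) hsum2
      _ = 2 * (c₂ * L + K) * DF := by ring
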